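/- Let x and y be elements of the symmetric group S₄ on {1,2,3,4} such that x has order 2, y has order 4, and {x, y} generates S₄. Then there exists an automorphism σ of S₄ with σ(x) = (12) and σ(y) = (1234). -/

import Mathlib

set_option maxRecDepth 10000 in
private lemma key_conj : ∀ x y : Equiv.Perm (Fin 4), x^2 = 1 → x ≠ 1 → y^4 = 1 → y^2 ≠ 1 →
    ((x*y*x⁻¹ = y ∨ x*y*x⁻¹ = y⁻¹) ∨
      ∃ g : Equiv.Perm (Fin 4), g*x*g⁻¹ = c[0,1] ∧ g*y*g⁻¹ = c[0,1,2,3]) := by decide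

set_option maxRecDepth 10000 in
private lemma key_nonnormal : ∀ y : Equiv.Perm (Fin 4), y^4 = 1 → y^2 ≠ 1 →
    ∃ g : Equiv.Perm (Fin 4), g*y*g⁻¹ ≠ 1 ∧ g*y*g⁻¹ ≠ y ∧ g*y*g⁻¹ ≠ y^2 ∧ g*y*g⁻¹ ≠ y^3 := by
  decide

/-- If `{x, y}` generates `S₄` with `ord(x) = 2` and `ord(y) = 4`, then there is
an automorphism `σ` of `S₄` with `σ(x) = (12)` and `σ(y) = (1234)`
(here `S₄` acts on `{0,1,2,3}`, shifting the labels by one). -/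
theorem stmt_3 (x y : Equiv.Perm (Fin 4))
    (hx : orderOf x = 2) (hy : orderOf y = 4)
    (hgen : Subgroup.closure ({x, y} : Set (Equiv.Perm (Fin 4))) = ⊤) :
    ∃ σ : MulAut (Equiv.Perm (Fin 4)),
      σ x = c[0, 1] ∧ σ y = c[0, 1, 2, 3] := by
  have hx2 : x ^ 2 = 1 := by have := pow_orderOf_eq_one x; rwa [hx] at this
  have hx1 : x ≠ 1 := by
    intro h; rw [h, orderOf_one] at hx; norm_num at hx
  have hy4 : y ^ 4 = 1 := by have := pow_orderOf_eq_one y; rwa [hy] at this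
  have hy2 : y ^ 2 ≠ 1 := by
    intro h
    have h2 := orderOf_dvd_of_pow_eq_one h
    rw [hy] at h2
    norm_num at h2
  rcases key_conj x y hx2 hx1 hy4 hy2 with hbad | ⟨g, hg1, hg2⟩
  · exfalso
    have hxx : x * x = 1 := by rw [← pow_two]; exact hx2
    have hxinv : x⁻¹ = x := inv_eq_of_mul_eq_one_right hxx
    -- x normalizes ⟨y⟩
    have key1 : ∀ h ∈ Subgroup.zpowers y, x * h * x⁻¹ ∈ Subgroup.zpowers y := by
      rintro _ ⟨k, rfl⟩
      have e : x * y ^ k * x⁻¹ = (x * y * x⁻¹) ^ k := by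
        rw [conj_zpow]
      rw [e]
      rcases hbad with h | h <;> rw [h]
      · exact ⟨k, rfl⟩
      · exact ⟨-k, by show y ^ (-k) = _; rw [zpow_neg, inv_zpow]⟩
    have hxN : x ∈ Subgroup.normalizer (Subgroup.zpowers y : Set (Equiv.Perm (Fin 4))) := by
      rw [Subgroup.mem_normalizer_iff]
      intro h
      constructor
      · exact key1 h
      · intro hh
        have h2 := key1 _ hh
        have e : x * (x * h * x⁻¹) * x⁻¹ = h := by
          rw [hxinv]
          calc x * (x * h * x) * x = (x * x) * h * (x * x) := by group
          _ = h := by rw [hxx]; group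
        rwa [e] at h2
    have hyN : y ∈ Subgroup.normalizer (Subgroup.zpowers y : Set (Equiv.Perm (Fin 4))) :=
      Subgroup.le_normalizer (Subgroup.mem_zpowers y)
    have hle : (⊤ : Subgroup (Equiv.Perm (Fin 4))) ≤ Subgroup.normalizer (Subgroup.zpowers y : Set (Equiv.Perm (Fin 4))) := by
      rw [← hgen]
      apply (Subgroup.closure_le _).mpr
      rintro z (rfl | rfl)
      · exact hxN
      · exact hyN
    obtain ⟨g, hg0, hgy1, hgy2, hgy3⟩ := key_nonnormal y hy4 hy2
    have hgN : g ∈ Subgroup.normalizer (Subgroup.zpowers y : Set (Equiv.Perm (Fin 4))) := hle (Subgroup.mem_top g)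
    have hmem : g * y * g⁻¹ ∈ Subgroup.zpowers y :=
      (Subgroup.mem_normalizer_iff.mp hgN y).mp (Subgroup.mem_zpowers y)
    obtain ⟨k, hk⟩ := hmem
    have hk' : y ^ k = g * y * g⁻¹ := hk
    have hy4' : y ^ (4 : ℤ) = 1 := by rw [show ((4:ℤ)) = ((4:ℕ):ℤ) by norm_num, zpow_natCast, hy4]
    have hred : y ^ k = y ^ (k % 4) := by
      conv_lhs => rw [show k = 4 * (k / 4) + k % 4 by omega]
      rw [zpow_add, zpow_mul, hy4', one_zpow, one_mul]
    rw [hred] at hk'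
    have h0 : 0 ≤ k % 4 := by omega
    have h4 : k % 4 < 4 := by omega
    interval_cases h : (k % 4)
    · rw [zpow_zero] at hk'; exact hg0 hk'.symm
    · rw [zpow_one] at hk'; exact hgy1 hk'.symm
    · rw [show ((2:ℤ)) = ((2:ℕ):ℤ) from rfl, zpow_natCast] at hk'; exact hgy2 hk'.symm
    · rw [show ((3:ℤ)) = ((3:ℕ):ℤ) from rfl, zpow_natCast] at hk'; exact hgy3 hk'.symm
  · exact ⟨MulAut.conj g, by simpa using hg1, by simpa using hg2⟩
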